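/- Let f₁ be holomorphic with nonvanishing derivative on the upper half-plane ℍ satisfying |f₁''(z)/f₁'(z)| ≤ 1/(2 Im z) for all z ∈ ℍ, let τ > 0, let p : ℍ → ℍ be holomorphic, and let f be holomorphic on ℍ with f'(z) = (f₁'(p(z)))^τ (via a fixed branch). Then |f''(z)/f'(z)| ≤ τ/(2 Im z) for all z ∈ ℍ. -/

import Mathlib

open Set Complex Metric

lemma cayley_im_pos {z u : ℂ} (hz : 0 < z.im) (hu : ‖u‖ < 1) :
    0 < ((z - (starRingEnd ℂ) z * u) / (1 - u)).im := by
  have hne : (1 : ℂ) - u ≠ 0 := by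
    intro h
    have : u = 1 := by linear_combination -h
    simp [this] at hu
  have h1 : Complex.normSq (1 - u) > 0 := by
    simpa [Complex.normSq_pos] using hne
  have h2 : Complex.normSq u < 1 := by
    have := hu
    rw [← Complex.sq_norm]
    nlinarith [norm_nonneg u]
  rw [Complex.div_im]
  have : (z - (starRingEnd ℂ) z * u).im * (1 - u).re / Complex.normSq (1 - u) -
      (z - (starRingEnd ℂ) z * u).re * (1 - u).im / Complex.normSq (1 - u)
      = z.im * (1 - Complex.normSq u) / Complex.normSq (1 - u) := by
    rw [div_sub_div_same]
    congr 1
    simp [Complex.normSq_apply, Complex.sub_re, Complex.sub_im, Complex.mul_re, Complex.mul_im]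
    ring
  rw [this]
  exact div_pos (mul_pos hz (by linarith)) h1

lemma mobius_abs_lt_one {a w : ℂ} (ha : 0 < a.im) (hw : 0 < w.im) :
    ‖(w - a) / (w - (starRingEnd ℂ) a)‖ < 1 := by
  have hne : w - (starRingEnd ℂ) a ≠ 0 := by
    intro h
    have : (w - (starRingEnd ℂ) a).im = 0 := by rw [h]; simp
    simp [Complex.sub_im, Complex.conj_im] at this
    linarith
  rw [norm_div, div_lt_one (by simpa [norm_pos_iff] using hne)]
  have h2 : Complex.normSq (w - a) < Complex.normSq (w - (starRingEnd ℂ) a) := by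
    simp only [Complex.normSq_apply, Complex.sub_re, Complex.sub_im, Complex.conj_re,
      Complex.conj_im]
    nlinarith
  have := Real.sqrt_lt_sqrt (Complex.normSq_nonneg _) h2
  simpa [Complex.norm_def] using this

lemma schwarz_pick_halfplane {p : ℂ → ℂ}
    (hp : DifferentiableOn ℂ p {z : ℂ | 0 < z.im})
    (hpmaps : Set.MapsTo p {z : ℂ | 0 < z.im} {z : ℂ | 0 < z.im})
    {z : ℂ} (hz : 0 < z.im) :
    ‖deriv p z‖ ≤ (p z).im / z.im := by
  have hS : IsOpen {z : ℂ | 0 < z.im} := isOpen_lt continuous_const Complex.continuous_im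
  set a := p z with ha_def
  have ha : 0 < a.im := hpmaps hz
  set q : ℂ → ℂ := fun u => (z - (starRingEnd ℂ) z * u) / (1 - u) with hq_def
  set φ : ℂ → ℂ := fun w => (w - a) / (w - (starRingEnd ℂ) a) with hφ_def
  set h : ℂ → ℂ := fun u => φ (p (q u)) with hh_def
  have hq0 : q 0 = z := by simp [hq_def]
  have hqim : ∀ u ∈ ball (0 : ℂ) 1, 0 < (q u).im := fun u hu =>
    cayley_im_pos hz (by simpa using hu)
  have hφa : φ a = 0 := by simp [hφ_def]
  have hh0 : h 0 = 0 := by rw [hh_def]; simp only [hq0, ← ha_def, hφa]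
  -- differentiability of pieces
  have hqdiff : ∀ u ∈ ball (0 : ℂ) 1, DifferentiableAt ℂ q u := by
    intro u hu
    have hne : (1 : ℂ) - u ≠ 0 := by
      intro hh
      have : u = 1 := by linear_combination -hh
      simp [this] at hu
    exact ((differentiableAt_const _).sub ((differentiableAt_const _).mul
      differentiableAt_id)).div ((differentiableAt_const _).sub differentiableAt_id) hne
  have hφdiff : ∀ w : ℂ, 0 < w.im → DifferentiableAt ℂ φ w := by
    intro w hw
    have hne : w - (starRingEnd ℂ) a ≠ 0 := by
      intro hh
      have : (w - (starRingEnd ℂ) a).im = 0 := by rw [hh]; simp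
      simp [Complex.sub_im, Complex.conj_im] at this
      linarith
    exact (differentiableAt_id.sub (differentiableAt_const _)).div
      (differentiableAt_id.sub (differentiableAt_const _)) hne
  have hhdiff : DifferentiableOn ℂ h (ball (0 : ℂ) 1) := by
    intro u hu
    have h1 : DifferentiableAt ℂ q u := hqdiff u hu
    have h2 : DifferentiableAt ℂ p (q u) := hp.differentiableAt (hS.mem_nhds (hqim u hu))
    have h3 : DifferentiableAt ℂ φ (p (q u)) := hφdiff _ (hpmaps (hqim u hu))
    exact ((h3.comp _ h2).comp _ h1).differentiableWithinAt
  have hhmaps : Set.MapsTo h (ball (0 : ℂ) 1) (ball (h 0) 1) := by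
    intro u hu
    rw [hh0, mem_ball, dist_zero_right]
    exact mobius_abs_lt_one ha (hpmaps (hqim u hu))
  have key := Complex.norm_deriv_le_div_of_mapsTo_ball hhdiff (hhmaps.mono_right ball_subset_closedBall) one_pos
  -- compute deriv h 0
  have hqd : HasDerivAt q (z - (starRingEnd ℂ) z) 0 := by
    have h1 : HasDerivAt (fun u : ℂ => z - (starRingEnd ℂ) z * u) (-(starRingEnd ℂ) z) 0 := by
      simpa using ((hasDerivAt_id (0:ℂ)).const_mul ((starRingEnd ℂ) z)).const_sub z
    have h2 : HasDerivAt (fun u : ℂ => 1 - u) (-1 : ℂ) 0 := by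
      simpa using (hasDerivAt_id (0:ℂ)).const_sub 1
    have h3 := h1.div h2 (by norm_num)
    exact h3.congr_deriv (by ring)
  have hpd : HasDerivAt p (deriv p z) z :=
    (hp.differentiableAt (hS.mem_nhds hz)).hasDerivAt
  have hane : a - (starRingEnd ℂ) a ≠ 0 := by
    intro hh
    have : (a - (starRingEnd ℂ) a).im = 0 := by rw [hh]; simp
    simp [Complex.sub_im, Complex.conj_im] at this
    linarith
  have hφd : HasDerivAt φ (1 / (a - (starRingEnd ℂ) a)) a := by
    have h1 : HasDerivAt (fun w : ℂ => w - a) 1 a := by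
      simpa using (hasDerivAt_id a).sub_const a
    have h2 : HasDerivAt (fun w : ℂ => w - (starRingEnd ℂ) a) 1 a := by
      simpa using (hasDerivAt_id a).sub_const ((starRingEnd ℂ) a)
    have h3 := h1.div h2 hane
    exact h3.congr_deriv (by field_simp; ring)
  have hpq : HasDerivAt (fun u => p (q u)) (deriv p z * (z - (starRingEnd ℂ) z)) 0 := by
    refine HasDerivAt.comp 0 ?_ hqd
    rw [hq0]; exact hpd
  have hφd' : HasDerivAt φ (1 / (a - (starRingEnd ℂ) a)) (p (q 0)) := by
    rw [hq0]; exact hφd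
  have hhd : HasDerivAt h
      (1 / (a - (starRingEnd ℂ) a) * (deriv p z * (z - (starRingEnd ℂ) z))) 0 :=
    by have := HasDerivAt.comp 0 hφd' hpq; exact this
  rw [hhd.deriv] at key
  have habsz : ‖z - (starRingEnd ℂ) z‖ = 2 * z.im := by
    rw [Complex.sub_conj, norm_mul, Complex.norm_I, Complex.norm_real, Real.norm_eq_abs, mul_one,
      abs_of_pos (by linarith)]
  have habsa : ‖a - (starRingEnd ℂ) a‖ = 2 * a.im := by
    rw [Complex.sub_conj, norm_mul, Complex.norm_I, Complex.norm_real, Real.norm_eq_abs, mul_one,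
      abs_of_pos (by linarith)]
  rw [norm_mul, norm_mul, norm_div, norm_one, habsa, habsz] at key
  have key2 : ‖deriv p z‖ * (2 * z.im) ≤ 2 * a.im := by
    have h2a : (0:ℝ) < 2 * a.im := by linarith
    calc ‖deriv p z‖ * (2 * z.im)
        = (2 * a.im) * (1 / (2 * a.im) * (‖deriv p z‖ * (2 * z.im))) := by
          field_simp
      _ ≤ (2 * a.im) * (1 / 1) := mul_le_mul_of_nonneg_left key h2a.le
      _ = 2 * a.im := by norm_num
  rw [le_div_iff₀ hz]
  linarith

/-- Lemma 9: if `f₁` is holomorphic on the upper half-plane with nonvanishing derivative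
and `|f₁''(z)/f₁'(z)| ≤ 1/(2 Im z)`, `τ > 0`, `p : ℍ → ℍ` is holomorphic, and `f` is
holomorphic on `ℍ` with `f'(z) = (f₁'(p(z)))^τ` (via a fixed branch `L` of the logarithm of
`f₁' ∘ p`), then `|f''(z)/f'(z)| ≤ τ/(2 Im z)` on `ℍ`. -/
theorem becker_halfplane_power_bound (f₁ : ℂ → ℂ)
    (hf₁ : DifferentiableOn ℂ f₁ {z : ℂ | 0 < z.im})
    (hf₁' : ∀ z : ℂ, 0 < z.im → deriv f₁ z ≠ 0)
    (hBecker : ∀ z : ℂ, 0 < z.im →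
      ‖deriv (deriv f₁) z / deriv f₁ z‖ ≤ 1 / (2 * z.im))
    (τ : ℝ) (hτ : 0 < τ)
    (p : ℂ → ℂ) (hp : DifferentiableOn ℂ p {z : ℂ | 0 < z.im})
    (hpmaps : Set.MapsTo p {z : ℂ | 0 < z.im} {z : ℂ | 0 < z.im})
    (L : ℂ → ℂ) (hL : DifferentiableOn ℂ L {z : ℂ | 0 < z.im})
    (hLexp : ∀ z : ℂ, 0 < z.im → Complex.exp (L z) = deriv f₁ (p z))
    (f : ℂ → ℂ) (hf : DifferentiableOn ℂ f {z : ℂ | 0 < z.im})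
    (hf' : ∀ z : ℂ, 0 < z.im → deriv f z = Complex.exp ((τ : ℂ) * L z)) :
    ∀ z : ℂ, 0 < z.im →
      ‖deriv (deriv f) z / deriv f z‖ ≤ τ / (2 * z.im) := by
  intro z hz
  have hS : IsOpen {z : ℂ | 0 < z.im} := isOpen_lt continuous_const Complex.continuous_im
  have hb : 0 < (p z).im := hpmaps hz
  have hLz : DifferentiableAt ℂ L z := hL.differentiableAt (hS.mem_nhds hz)
  have hpz : DifferentiableAt ℂ p z := hp.differentiableAt (hS.mem_nhds hz)
  have hdf₁ : AnalyticOnNhd ℂ (deriv f₁) {z : ℂ | 0 < z.im} :=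
    (hf₁.analyticOnNhd hS).deriv
  have hdf₁pz : DifferentiableAt ℂ (deriv f₁) (p z) :=
    ((hdf₁ (p z) hb).differentiableAt)
  -- derivative of L
  have hE : (fun w => Complex.exp (L w)) =ᶠ[nhds z] fun w => deriv f₁ (p w) := by
    filter_upwards [hS.mem_nhds hz] with w hw using hLexp w hw
  have h1 : HasDerivAt (fun w => Complex.exp (L w)) (Complex.exp (L z) * deriv L z) z :=
    hLz.hasDerivAt.cexp
  have h2 : HasDerivAt (fun w => deriv f₁ (p w)) (deriv (deriv f₁) (p z) * deriv p z) z :=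
    HasDerivAt.comp z hdf₁pz.hasDerivAt hpz.hasDerivAt
  have h1' : HasDerivAt (fun w => deriv f₁ (p w)) (Complex.exp (L z) * deriv L z) z :=
    h1.congr_of_eventuallyEq hE.symm
  have huniq : Complex.exp (L z) * deriv L z = deriv (deriv f₁) (p z) * deriv p z :=
    h1'.unique h2
  have hexp : Complex.exp (L z) = deriv f₁ (p z) := hLexp z hz
  have hne : deriv f₁ (p z) ≠ 0 := hf₁' (p z) hb
  have hLderiv : deriv L z = deriv (deriv f₁) (p z) / deriv f₁ (p z) * deriv p z := by
    field_simp
    linear_combination huniq - deriv L z * hexp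
  -- derivative of deriv f
  have hE2 : deriv f =ᶠ[nhds z] fun w => Complex.exp ((τ : ℂ) * L w) := by
    filter_upwards [hS.mem_nhds hz] with w hw using hf' w hw
  have h3 : HasDerivAt (fun w => Complex.exp ((τ : ℂ) * L w))
      (Complex.exp ((τ : ℂ) * L z) * ((τ : ℂ) * deriv L z)) z :=
    (hLz.hasDerivAt.const_mul (τ : ℂ)).cexp
  have hdd : deriv (deriv f) z = Complex.exp ((τ : ℂ) * L z) * ((τ : ℂ) * deriv L z) := by
    rw [hE2.deriv_eq]
    exact h3.deriv
  have hratio : deriv (deriv f) z / deriv f z = (τ : ℂ) * deriv L z := by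
    rw [hdd, hf' z hz]
    field_simp [Complex.exp_ne_zero]
  rw [hratio, hLderiv]
  rw [norm_mul, norm_mul]
  have hB := hBecker (p z) hb
  have hP := schwarz_pick_halfplane hp hpmaps hz
  have habsτ : ‖(τ : ℂ)‖ = τ := by
    rw [Complex.norm_real, Real.norm_eq_abs, abs_of_pos hτ]
  rw [habsτ]
  have key : ‖deriv (deriv f₁) (p z) / deriv f₁ (p z)‖ * ‖deriv p z‖
      ≤ 1 / (2 * (p z).im) * ((p z).im / z.im) := by
    exact mul_le_mul hB hP (norm_nonneg _) (by positivity)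
  have heq : 1 / (2 * (p z).im) * ((p z).im / z.im) = 1 / (2 * z.im) := by
    field_simp
  rw [heq] at key
  calc τ * (‖deriv (deriv f₁) (p z) / deriv f₁ (p z)‖ * ‖deriv p z‖)
      ≤ τ * (1 / (2 * z.im)) := by
        exact mul_le_mul_of_nonneg_left key hτ.le
    _ = τ / (2 * z.im) := by ring
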